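/- arXiv:2410.05000 — 6 statements merged into one kernel-verified Lean document; each statement's English description precedes it below -/
import Mathlib

section
/- Let X be a symmetric positive definite d×d real matrix. Define the admissible set G = {U = (D, m, E) : D > 0 and E − sqrt(D² + m·X·mᵀ) > 0}. Define the set of vectors Ξ = {(1,0,…,0)} ∪ {ξ(v) = (−sqrt(1 − v·X·vᵀ), −vX, 1) : v ∈ ℝᵈ, v·X·vᵀ < 1}. Then U ∈ G if and only if U·ξ > 0 for every ξ ∈ Ξ (geometric quasi-linearization representation). -/
open Matrix

/-- geometric quasi-linearization (GQL) representation of the admissible set: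
`U = (D,m,E)` satisfies `D > 0` and `E - sqrt(D² + m X mᵀ) > 0` iff `U ⬝ ξ > 0` for every
`ξ` in the family `Ξ = {(1,0,…,0)} ∪ {(-sqrt(1 - v X vᵀ), -vX, 1) : v X vᵀ < 1}`. -/
theorem stmt1 (d : ℕ) (X : Matrix (Fin d) (Fin d) ℝ) (hX : X.PosDef)
    (D : ℝ) (m : Fin d → ℝ) (E : ℝ) :
    (0 < D ∧ 0 < E - Real.sqrt (D ^ 2 + m ⬝ᵥ X.mulVec m)) ↔
    (0 < D ∧ ∀ v : Fin d → ℝ, v ⬝ᵥ X.mulVec v < 1 →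
      0 < D * (-Real.sqrt (1 - v ⬝ᵥ X.mulVec v)) + m ⬝ᵥ (-(X.mulVec v)) + E) := by
  have hs : Xᵀ = X := by simpa using hX.isHermitian.eq
  have hsym : ∀ u w : Fin d → ℝ, u ⬝ᵥ X.mulVec w = w ⬝ᵥ X.mulVec u := fun u w => by
    rw [dotProduct_mulVec, ← mulVec_transpose, hs, dotProduct_comm]
  have hq : ∀ w : Fin d → ℝ, 0 ≤ w ⬝ᵥ X.mulVec w := fun w => by
    simpa using hX.posSemidef.dotProduct_mulVec_nonneg w
  set a := m ⬝ᵥ X.mulVec m with hadef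
  have ha0 : 0 ≤ a := hq m
  have hCS : ∀ v : Fin d → ℝ, (m ⬝ᵥ X.mulVec v) ^ 2 ≤ a * (v ⬝ᵥ X.mulVec v) := by
    intro v
    have key : ∀ t : ℝ,
        0 ≤ (v ⬝ᵥ X.mulVec v) * (t * t) + (-(2 * (m ⬝ᵥ X.mulVec v))) * t + a := by
      intro t
      have h := hq (m - t • v)
      have expand : (m - t • v) ⬝ᵥ X.mulVec (m - t • v)
          = (v ⬝ᵥ X.mulVec v) * (t * t) + (-(2 * (m ⬝ᵥ X.mulVec v))) * t + a := by
        simp only [mulVec_sub, mulVec_smul, sub_dotProduct, dotProduct_sub,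
          smul_dotProduct, dotProduct_smul, smul_eq_mul, hadef]
        rw [hsym v m]
        ring
      linarith [expand ▸ h]
    have hd := discrim_le_zero key
    rw [discrim] at hd
    nlinarith [hd]
  constructor
  · rintro ⟨hD, hE⟩
    refine ⟨hD, fun v hv => ?_⟩
    set c := v ⬝ᵥ X.mulVec v with hc
    have hc0 : 0 ≤ c := hq v
    set x := Real.sqrt (1 - c) with hxdef
    have hx0 : 0 ≤ x := Real.sqrt_nonneg _
    have hx2 : x ^ 2 = 1 - c := Real.sq_sqrt (by linarith)
    set u := Real.sqrt a with hudef
    set w := Real.sqrt c with hwdef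
    have hu0 : 0 ≤ u := Real.sqrt_nonneg _
    have hw0 : 0 ≤ w := Real.sqrt_nonneg _
    have hu2 : u ^ 2 = a := Real.sq_sqrt ha0
    have hw2 : w ^ 2 = c := Real.sq_sqrt hc0
    set S := Real.sqrt (D ^ 2 + a) with hSdef
    have hS0 : 0 ≤ S := Real.sqrt_nonneg _
    have hS2 : S ^ 2 = D ^ 2 + a := Real.sq_sqrt (by nlinarith)
    set b := m ⬝ᵥ X.mulVec v with hb
    have hbuw : b ≤ u * w := by
      have h1 := hCS v
      nlinarith [sq_nonneg (b - u * w), sq_nonneg (b + u * w), mul_nonneg hu0 hw0]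
    have key : D * x + b ≤ S := by
      rcases le_or_gt (D * x + b) 0 with h | h
      · linarith
      · nlinarith [sq_nonneg (D * w - u * x), mul_nonneg hu0 hw0,
          mul_nonneg (mul_nonneg hD.le hx0) (mul_nonneg hu0 hw0)]
    rw [dotProduct_neg, ← hb]
    linarith
  · rintro ⟨hD, hcon⟩
    refine ⟨hD, ?_⟩
    set S := Real.sqrt (D ^ 2 + a) with hSdef
    have hSpos : 0 < S := Real.sqrt_pos.mpr (by nlinarith)
    have hS2 : S ^ 2 = D ^ 2 + a := Real.sq_sqrt (by nlinarith)
    set v := (1 / S) • m with hvdef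
    have hcv : v ⬝ᵥ X.mulVec v = a / S ^ 2 := by
      simp only [hvdef, mulVec_smul, smul_dotProduct, dotProduct_smul, smul_eq_mul, ← hadef]
      field_simp
    have hv1 : v ⬝ᵥ X.mulVec v < 1 := by
      rw [hcv, div_lt_one (by positivity)]
      nlinarith
    have h := hcon v hv1
    rw [hcv] at h
    have h1c : 1 - a / S ^ 2 = (D / S) ^ 2 := by
      field_simp
      nlinarith
    rw [h1c, Real.sqrt_sq (by positivity)] at h
    have hmv : m ⬝ᵥ (-(X.mulVec v)) = -(a / S) := by
      simp only [hvdef, mulVec_smul, dotProduct_neg, dotProduct_smul, smul_eq_mul, ← hadef]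
      field_simp
    rw [hmv] at h
    have hfin : D * (D / S) + a / S = S := by
      field_simp
      nlinarith
    linarith
end

section
/- Let X be symmetric positive definite, and suppose U = (D, m, E) satisfies D > 0 and E − sqrt(D² + m X mᵀ) > 0. Then for any v ∈ ℝᵈ with v X vᵀ ≤ 1, one has E − v X mᵀ − D·sqrt(1 − v X vᵀ) ≥ E − sqrt(D² + m X mᵀ) > 0. -/
open Matrix

/-- Scalar key lemma. -/
lemma stmt2_key (D p q r : ℝ) (hD : 0 < D) (hp : 0 ≤ p) (hr : 0 ≤ r)
    (hq : q ^ 2 ≤ p * r) (hp1 : p ≤ 1) :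
    q + D * Real.sqrt (1 - p) ≤ Real.sqrt (D ^ 2 + r) := by
  set s := Real.sqrt (1 - p) with hs
  set t := Real.sqrt (D ^ 2 + r) with ht
  set u := Real.sqrt p with hu
  set w := Real.sqrt r with hw
  have hs0 : 0 ≤ s := Real.sqrt_nonneg _
  have ht0 : 0 ≤ t := Real.sqrt_nonneg _
  have hu0 : 0 ≤ u := Real.sqrt_nonneg _
  have hw0 : 0 ≤ w := Real.sqrt_nonneg _
  have hs2 : s ^ 2 = 1 - p := Real.sq_sqrt (by linarith)
  have ht2 : t ^ 2 = D ^ 2 + r := Real.sq_sqrt (by positivity)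
  have hu2 : u ^ 2 = p := Real.sq_sqrt hp
  have hw2 : w ^ 2 = r := Real.sq_sqrt hr
  have hquw : q ≤ u * w := by
    have h1 : q ^ 2 ≤ (u * w) ^ 2 := by rw [mul_pow, hu2, hw2]; exact hq
    nlinarith [mul_nonneg hu0 hw0]
  have hmain : u * w + D * s ≤ t := by
    nlinarith [sq_nonneg (w * s - D * u), sq_nonneg (u * w + D * s), mul_nonneg (mul_nonneg hu0 hw0) (mul_nonneg hD.le hs0)]
  linarith [mul_le_mul_of_nonneg_left (le_refl s) hD.le]

/-- the Cauchy–Schwarz estimate: if `D > 0` and `E - sqrt(D² + m X mᵀ) > 0`,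
then for all `v` with `v X vᵀ ≤ 1`,
`E - v X mᵀ - D sqrt(1 - v X vᵀ) ≥ E - sqrt(D² + m X mᵀ) > 0`. -/
theorem stmt2 (d : ℕ) (X : Matrix (Fin d) (Fin d) ℝ) (hX : X.PosDef)
    (D E : ℝ) (m : Fin d → ℝ) (hD : 0 < D)
    (hq : 0 < E - Real.sqrt (D ^ 2 + m ⬝ᵥ X.mulVec m))
    (v : Fin d → ℝ) (hv : v ⬝ᵥ X.mulVec v ≤ 1) :
    E - Real.sqrt (D ^ 2 + m ⬝ᵥ X.mulVec m) ≤
      E - v ⬝ᵥ X.mulVec m - D * Real.sqrt (1 - v ⬝ᵥ X.mulVec v) ∧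
    0 < E - Real.sqrt (D ^ 2 + m ⬝ᵥ X.mulVec m) := by
  obtain ⟨B, hB⟩ : ∃ B : Matrix (Fin d) (Fin d) ℝ, X = Bᴴ * B := by
    open scoped MatrixOrder in
    exact CStarAlgebra.nonneg_iff_eq_star_mul_self.mp hX.posSemidef.nonneg
  have hdot : ∀ a b : Fin d → ℝ, a ⬝ᵥ X.mulVec b = (B.mulVec a) ⬝ᵥ (B.mulVec b) := by
    intro a b
    rw [hB]
    simp only [conjTranspose_eq_transpose_of_trivial, ← Matrix.mulVec_mulVec,
      dotProduct_mulVec, Matrix.vecMul_transpose]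
  have hCS : (v ⬝ᵥ X.mulVec m) ^ 2 ≤ (v ⬝ᵥ X.mulVec v) * (m ⬝ᵥ X.mulVec m) := by
    rw [hdot v m, hdot v v, hdot m m]
    have := Finset.sum_mul_sq_le_sq_mul_sq Finset.univ (B.mulVec v) (B.mulVec m)
    simpa [dotProduct, sq] using this
  have hvv : 0 ≤ v ⬝ᵥ X.mulVec v := by rw [hdot]; exact Finset.sum_nonneg fun i _ => mul_self_nonneg _
  have hmm : 0 ≤ m ⬝ᵥ X.mulVec m := by rw [hdot]; exact Finset.sum_nonneg fun i _ => mul_self_nonneg _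
  have key := stmt2_key D (v ⬝ᵥ X.mulVec v) (v ⬝ᵥ X.mulVec m) (m ⬝ᵥ X.mulVec m) hD hvv hmm hCS hv
  exact ⟨by linarith, hq⟩
end

section
/- For the special RHD primitive-to-conserved map with ideal equation of state: given Γ ∈ (1,2], fix conserved variables (D, m, E) with D > 0 and E > sqrt(D² + m X mᵀ) for symmetric positive definite X. Define φ(p) = p/(Γ−1) − E + (m X mᵀ)/(E+p) + D·sqrt(1 − (m X mᵀ)/(E+p)²) for p ∈ [0, ∞). Then φ(0) < 0, φ(p) → +∞ as p → +∞, φ is continuously differentiable with φ'(p) > 0 for all p ≥ 0, and consequently φ has a unique root in (0, ∞). -/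
open Matrix

/-- properties of the pressure function
`φ(p) = p/(Γ-1) - E + (mXmᵀ)/(E+p) + D sqrt(1 - (mXmᵀ)/(E+p)²)`:
`φ(0) < 0`, `φ(p) → +∞`, `φ` is continuously differentiable on `[0,∞)` with positive
derivative there, and `φ` has a unique root in `(0,∞)`. -/
theorem stmt5 (d : ℕ) (X : Matrix (Fin d) (Fin d) ℝ) (hX : X.PosDef)
    (Γ D E : ℝ) (m : Fin d → ℝ)
    (hΓ1 : 1 < Γ) (hΓ2 : Γ ≤ 2)
    (hD : 0 < D) (hE : Real.sqrt (D ^ 2 + m ⬝ᵥ X.mulVec m) < E)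
    (φ : ℝ → ℝ)
    (hφ : ∀ p, φ p = p / (Γ - 1) - E + (m ⬝ᵥ X.mulVec m) / (E + p)
        + D * Real.sqrt (1 - (m ⬝ᵥ X.mulVec m) / (E + p) ^ 2)) :
    φ 0 < 0 ∧
    Filter.Tendsto φ Filter.atTop Filter.atTop ∧
    (∃ φ' : ℝ → ℝ, ContinuousOn φ' (Set.Ici 0) ∧
      ∀ p ∈ Set.Ici (0 : ℝ), HasDerivAt φ (φ' p) p ∧ 0 < φ' p) ∧
    (∃! p : ℝ, 0 < p ∧ φ p = 0) := by
  set M := m ⬝ᵥ X.mulVec m with hMdef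
  have hM : 0 ≤ M := by
    have := hX.posSemidef.re_dotProduct_nonneg m
    simpa [hMdef] using this
  have hE0 : 0 < E := lt_of_le_of_lt (Real.sqrt_nonneg _) hE
  have hEM : D ^ 2 + M < E ^ 2 := (Real.sqrt_lt' hE0).mp hE
  have hME : M < E ^ 2 := by nlinarith
  have hΓ : 0 < Γ - 1 := by linarith
  have hEp : ∀ p : ℝ, 0 ≤ p → 0 < E + p := fun p hp => by linarith
  have hMEp : ∀ p : ℝ, 0 ≤ p → M < (E + p) ^ 2 := fun p hp => by nlinarith
  have hsqpos : ∀ p : ℝ, 0 ≤ p → 0 < 1 - M / (E + p) ^ 2 := by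
    intro p hp
    have h1 := hEp p hp
    have h2 := hMEp p hp
    have : M / (E + p) ^ 2 < 1 := (div_lt_one (by positivity)).mpr h2
    linarith
  -- φ 0 < 0
  set s := Real.sqrt (E ^ 2 - M) with hsdef
  have hs2 : s ^ 2 = E ^ 2 - M := Real.sq_sqrt (by nlinarith)
  have hsnn : 0 ≤ s := Real.sqrt_nonneg _
  have hDs : D < s := by nlinarith
  have hspos : 0 < s := lt_trans hD hDs
  have hφ0 : φ 0 < 0 := by
    have hsqrt0 : Real.sqrt (1 - M / (E + 0) ^ 2) = s / E := by
      rw [add_zero, show (1 : ℝ) - M / E ^ 2 = (E ^ 2 - M) / E ^ 2 by field_simp,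
        Real.sqrt_div (by nlinarith), Real.sqrt_sq hE0.le]
    have heq : φ 0 = (M + D * s) / E - E := by
      rw [hφ 0, hsqrt0]; ring
    rw [heq]
    rw [sub_neg, div_lt_iff₀ hE0]
    nlinarith
  -- the derivative
  set φ' : ℝ → ℝ := fun p => 1 / (Γ - 1) - M / (E + p) ^ 2
      + D * (M * (2 * (E + p)) / ((E + p) ^ 2) ^ 2
        / (2 * Real.sqrt (1 - M / (E + p) ^ 2))) with hφ'def
  have hd : ∀ p ∈ Set.Ici (0 : ℝ), HasDerivAt φ (φ' p) p ∧ 0 < φ' p := by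
    intro p hp
    have hp0 : (0 : ℝ) ≤ p := hp
    have hup : (0 : ℝ) < E + p := hEp p hp0
    have hgp : (0 : ℝ) < 1 - M / (E + p) ^ 2 := hsqpos p hp0
    have hSp : (0 : ℝ) < Real.sqrt (1 - M / (E + p) ^ 2) := Real.sqrt_pos.mpr hgp
    constructor
    · have h2 : HasDerivAt (fun x : ℝ => E + x) 1 p := (hasDerivAt_id p).const_add E
      have h1 : HasDerivAt (fun x : ℝ => x / (Γ - 1)) (1 / (Γ - 1)) p :=
        (hasDerivAt_id p).div_const _
      have h3 : HasDerivAt (fun x : ℝ => M / (E + x))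
          ((0 * (E + p) - M * 1) / (E + p) ^ 2) p :=
        (hasDerivAt_const p M).div h2 hup.ne'
      have h2sq : HasDerivAt (fun x : ℝ => (E + x) ^ 2)
          ((2 : ℕ) * (E + p) ^ (2 - 1) * 1) p := h2.pow 2
      have h5 : HasDerivAt (fun x : ℝ => M / (E + x) ^ 2)
          ((0 * (E + p) ^ 2 - M * ((2 : ℕ) * (E + p) ^ (2 - 1) * 1)) / ((E + p) ^ 2) ^ 2) p :=
        (hasDerivAt_const p M).div h2sq (by positivity)
      have h6 : HasDerivAt (fun x : ℝ => 1 - M / (E + x) ^ 2)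
          (0 - (0 * (E + p) ^ 2 - M * ((2 : ℕ) * (E + p) ^ (2 - 1) * 1)) / ((E + p) ^ 2) ^ 2)
          p := (hasDerivAt_const p 1).sub h5
      have h7 := h6.sqrt hgp.ne'
      have h8 := h7.const_mul D
      have total := ((h1.sub_const E).add h3).add h8
      have heq : φ = fun x : ℝ => x / (Γ - 1) - E + M / (E + x)
          + D * Real.sqrt (1 - M / (E + x) ^ 2) := funext hφ
      rw [heq, hφ'def]
      refine total.congr_deriv ?_
      ring
    · rw [hφ'def]
      have hA : (1 : ℝ) ≤ 1 / (Γ - 1) := by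
        rw [le_div_iff₀ hΓ]; linarith
      have hB : M / (E + p) ^ 2 < 1 := (div_lt_one (by positivity)).mpr (hMEp p hp0)
      have hC : 0 ≤ D * (M * (2 * (E + p)) / ((E + p) ^ 2) ^ 2
          / (2 * Real.sqrt (1 - M / (E + p) ^ 2))) := by positivity
      simp only []
      linarith
  have hcontφ : ContinuousOn φ (Set.Ici 0) :=
    fun x hx => ((hd x hx).1.continuousAt).continuousWithinAt
  have hbound : ∀ p, 0 ≤ p → p / (Γ - 1) - E ≤ φ p := by
    intro p hp
    rw [hφ p]
    have h1 : 0 ≤ M / (E + p) := div_nonneg hM (hEp p hp).le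
    have h2 : 0 ≤ D * Real.sqrt (1 - M / (E + p) ^ 2) :=
      mul_nonneg hD.le (Real.sqrt_nonneg _)
    linarith
  refine ⟨hφ0, ?_, ?_, ?_⟩
  · have hbase : Filter.Tendsto (fun p : ℝ => p / (Γ - 1) - E) Filter.atTop Filter.atTop := by
      have := (Filter.tendsto_id (α := ℝ) (x := Filter.atTop)).atTop_div_const hΓ
      simpa [sub_eq_add_neg] using Filter.tendsto_atTop_add_const_right _ (-E) this
    refine Filter.tendsto_atTop_mono' _ ?_ hbase
    filter_upwards [Filter.eventually_ge_atTop (0 : ℝ)] with p hp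
    exact hbound p hp
  · refine ⟨φ', ?_, hd⟩
    intro x hx
    have hx0 : (0 : ℝ) ≤ x := hx
    have hux : (0 : ℝ) < E + x := hEp x hx0
    have hgx : (0 : ℝ) < 1 - M / (E + x) ^ 2 := hsqpos x hx0
    have hne2 : ((E + x) ^ 2 : ℝ) ≠ 0 := by positivity
    have hne4 : (((E + x) ^ 2) ^ 2 : ℝ) ≠ 0 := by positivity
    have hneS : (2 * Real.sqrt (1 - M / (E + x) ^ 2) : ℝ) ≠ 0 := by
      have := Real.sqrt_pos.mpr hgx; positivity
    apply ContinuousAt.continuousWithinAt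
    rw [hφ'def]
    apply ContinuousAt.add
    · exact ContinuousAt.sub continuousAt_const
        (ContinuousAt.div continuousAt_const (by fun_prop) hne2)
    · apply ContinuousAt.mul continuousAt_const
      apply ContinuousAt.div
      · exact ContinuousAt.div (by fun_prop) (by fun_prop) hne4
      · apply ContinuousAt.mul continuousAt_const
        exact Real.continuous_sqrt.continuousAt.comp
          (continuousAt_const.sub (ContinuousAt.div continuousAt_const (by fun_prop) hne2))
      · exact hneS
  · -- unique root
    have hmono : StrictMonoOn φ (Set.Ici 0) := by
      apply strictMonoOn_of_deriv_pos (convex_Ici 0) hcontφ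
      intro x hx
      rw [interior_Ici] at hx
      have hx' : x ∈ Set.Ici (0 : ℝ) := Set.mem_Ici.mpr (le_of_lt hx)
      rw [(hd x hx').1.deriv]
      exact (hd x hx').2
    set B := (Γ - 1) * (E + 1) with hBdef
    have hB0 : 0 < B := by positivity
    have hφB : 0 < φ B := by
      have h1 := hbound B hB0.le
      have h2 : B / (Γ - 1) = E + 1 := by
        rw [hBdef]; field_simp
      rw [h2] at h1; linarith
    have hmem : (0 : ℝ) ∈ Set.Icc (φ 0) (φ B) := ⟨hφ0.le, hφB.le⟩
    obtain ⟨c, hc, hφc⟩ := intermediate_value_Icc hB0.le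
      (hcontφ.mono (Set.Icc_subset_Ici_self)) hmem
    have hc0 : 0 < c := by
      rcases hc.1.lt_or_eq with h | h
      · exact h
      · exfalso; rw [← h] at hφc; linarith
    refine ⟨c, ⟨hc0, hφc⟩, ?_⟩
    rintro q ⟨hq0, hqroot⟩
    exact hmono.injOn (le_of_lt hq0) (le_of_lt hc0) (by rw [hqroot, hφc])
end

section
/- Under the assumptions D > 0, E > sqrt(D² + m X mᵀ), Γ ∈ (1,2], the pressure root p(U) of the equation φ(p) = p/(Γ−1) − E + (m X mᵀ)/(E+p) + D·sqrt(1 − (m X mᵀ)/(E+p)²) = 0 satisfies 0 < p(U) ≤ (Γ−1)(E − D·sqrt(1 − (m X mᵀ)/E²)). -/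
open Matrix

/-- the pressure root of `φ` satisfies
`0 < p ≤ (Γ-1)(E - D sqrt(1 - (mXmᵀ)/E²))`. -/
theorem stmt6 (d : ℕ) (X : Matrix (Fin d) (Fin d) ℝ) (hX : X.PosDef)
    (Γ D E : ℝ) (m : Fin d → ℝ)
    (hΓ1 : 1 < Γ) (hΓ2 : Γ ≤ 2)
    (hD : 0 < D) (hE : Real.sqrt (D ^ 2 + m ⬝ᵥ X.mulVec m) < E)
    (φ : ℝ → ℝ)
    (hφ : ∀ p, φ p = p / (Γ - 1) - E + (m ⬝ᵥ X.mulVec m) / (E + p)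
        + D * Real.sqrt (1 - (m ⬝ᵥ X.mulVec m) / (E + p) ^ 2))
    (p : ℝ) (hp : 0 ≤ p) (hroot : φ p = 0) :
    0 < p ∧ p ≤ (Γ - 1) * (E - D * Real.sqrt (1 - (m ⬝ᵥ X.mulVec m) / E ^ 2)) := by
  set r : ℝ := m ⬝ᵥ X.mulVec m with hrdef
  have hr : 0 ≤ r := by
    have := hX.posSemidef.dotProduct_mulVec_nonneg m
    simpa [hrdef] using this
  have hE0 : 0 < E := lt_of_le_of_lt (Real.sqrt_nonneg _) hE
  have hE2 : D ^ 2 + r < E ^ 2 := by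
    have := (Real.sqrt_lt' hE0).mp hE
    linarith
  have hEp : 0 < E + p := by linarith
  have hrE2 : r / E ^ 2 ≤ 1 := by
    rw [div_le_one (by positivity)]
    nlinarith
  have hΓ : 0 < Γ - 1 := by linarith
  -- sqrt facts
  set s0 : ℝ := Real.sqrt (1 - r / E ^ 2) with hs0
  set sp : ℝ := Real.sqrt (1 - r / (E + p) ^ 2) with hsp
  have hs0nn : 0 ≤ s0 := Real.sqrt_nonneg _
  have hs0sq : s0 ^ 2 = 1 - r / E ^ 2 := Real.sq_sqrt (by linarith)
  have hmono : s0 ≤ sp := by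
    apply Real.sqrt_le_sqrt
    have h1 : r / (E + p) ^ 2 ≤ r / E ^ 2 := by
      apply div_le_div_of_nonneg_left hr (by positivity)
      nlinarith
    linarith
  have hroot' := hroot
  rw [hφ p] at hroot'
  constructor
  · rcases lt_or_eq_of_le hp with h | h
    · exact h
    · exfalso
      subst h
      -- φ 0 = 0 : 0 = -E + r/E + D*s0 (here E+0 = E)
      have h0 : -E + r / E + D * s0 = 0 := by
        have : (0:ℝ) / (Γ - 1) - E + r / (E + 0) + D * Real.sqrt (1 - r / (E + 0) ^ 2) = 0 :=
          hroot'
        simpa [hs0] using this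
      -- E - r/E = D * s0, square
      have key : E - r / E = D * s0 := by linarith
      have hsq : (E - r / E) ^ 2 = D ^ 2 * (1 - r / E ^ 2) := by
        rw [key, mul_pow, hs0sq]
      have hEne : E ≠ 0 := ne_of_gt hE0
      have h1 : (E ^ 2 - r) ^ 2 = D ^ 2 * (E ^ 2 - r) := by
        calc (E ^ 2 - r) ^ 2 = (E - r / E) ^ 2 * E ^ 2 := by field_simp
        _ = D ^ 2 * (1 - r / E ^ 2) * E ^ 2 := by rw [hsq]
        _ = D ^ 2 * (E ^ 2 - r) := by field_simp
      have h2 : 0 < E ^ 2 - r := by nlinarith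
      have h3 : (E ^ 2 - r) * ((E ^ 2 - r) - D ^ 2) = 0 := by ring_nf; ring_nf at h1; linarith
      rcases mul_eq_zero.mp h3 with h | h
      · linarith
      · nlinarith
  · -- p / (Γ-1) = E - r/(E+p) - D * sp ≤ E - D * s0
    have h1 : p / (Γ - 1) = E - r / (E + p) - D * sp := by linarith
    have h2 : p / (Γ - 1) ≤ E - D * s0 := by
      have hrEp : 0 ≤ r / (E + p) := div_nonneg hr hEp.le
      nlinarith [mul_le_mul_of_nonneg_left hmono hD.le]
    calc p = (Γ - 1) * (p / (Γ - 1)) := by field_simp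
    _ ≤ (Γ - 1) * (E - D * s0) := by nlinarith
end

section
/- Let Γ ∈ (1,2] and (D, m, E) satisfy D > 0 and E > sqrt(D² + m X mᵀ). Define g(p) = p − (Γ−1)φ(p) where φ(p) = p/(Γ−1) − E + (m X mᵀ)/(E+p) + D·sqrt(1 − (m X mᵀ)/(E+p)²). Then for all p > 0: 0 ≤ g'(p) ≤ δ where δ := (Γ−1)(m X mᵀ)/E² < 1. Consequently g is a contraction on [0,∞) with Lipschitz constant δ, and the fixed-point iteration p^{(n)} = g(p^{(n−1)}) with any initial value p^{(0)} > 0 stays nonnegative and converges to the unique root p(U) of φ with |p^{(n)} − p(U)| ≤ δⁿ |p^{(0)} − p(U)|. -/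
open Matrix

set_option maxHeartbeats 2000000 in
/-- the fixed-point map `g(p) = p - (Γ-1)φ(p)` has derivative in `[0, δ]` with
`δ = (Γ-1)(mXmᵀ)/E² < 1`, is a contraction on `[0,∞)` with Lipschitz constant `δ`, and the
fixed-point iteration starting from any `p⁰ > 0` stays nonnegative and converges to the
unique positive root of `φ` with geometric error `δⁿ`. -/
theorem stmt7 (d : ℕ) (X : Matrix (Fin d) (Fin d) ℝ) (hX : X.PosDef)
    (Γ D E δ : ℝ) (m : Fin d → ℝ)
    (hΓ1 : 1 < Γ) (hΓ2 : Γ ≤ 2)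
    (hD : 0 < D) (hE : Real.sqrt (D ^ 2 + m ⬝ᵥ X.mulVec m) < E)
    (φ g : ℝ → ℝ)
    (hφ : ∀ p, φ p = p / (Γ - 1) - E + (m ⬝ᵥ X.mulVec m) / (E + p)
        + D * Real.sqrt (1 - (m ⬝ᵥ X.mulVec m) / (E + p) ^ 2))
    (hg : ∀ p, g p = p - (Γ - 1) * φ p)
    (hδ : δ = (Γ - 1) * (m ⬝ᵥ X.mulVec m) / E ^ 2)
    (seq : ℕ → ℝ) (hs0 : 0 < seq 0) (hsrec : ∀ n, seq (n + 1) = g (seq n)) :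
    δ < 1 ∧
    (∀ p : ℝ, 0 < p → ∃ g' : ℝ, HasDerivAt g g' p ∧ 0 ≤ g' ∧ g' ≤ δ) ∧
    (∀ p₁ p₂ : ℝ, 0 ≤ p₁ → 0 ≤ p₂ → |g p₁ - g p₂| ≤ δ * |p₁ - p₂|) ∧
    (∃! pstar : ℝ, 0 < pstar ∧ φ pstar = 0) ∧
    (∀ pstar : ℝ, 0 < pstar → φ pstar = 0 →
      (∀ n, 0 ≤ seq n) ∧
      (∀ n, |seq n - pstar| ≤ δ ^ n * |seq 0 - pstar|) ∧
      Filter.Tendsto seq Filter.atTop (nhds pstar)) := by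
  set M := m ⬝ᵥ X.mulVec m with hMdef
  have hM0 : 0 ≤ M := by simpa [hMdef] using hX.posSemidef.dotProduct_mulVec_nonneg m
  have hΓ : 0 < Γ - 1 := by linarith
  have hE0 : 0 < E := lt_of_le_of_lt (Real.sqrt_nonneg _) hE
  have hE2 : D ^ 2 + M < E ^ 2 := by
    have h := Real.sq_sqrt (by positivity : (0:ℝ) ≤ D ^ 2 + M)
    nlinarith [Real.sqrt_nonneg (D ^ 2 + M)]
  have hδ0 : 0 ≤ δ := by rw [hδ]; positivity
  have hδ1 : δ < 1 := by
    rw [hδ, div_lt_one (by positivity)]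
    nlinarith
  -- key inequality : for q ≥ E, M/q + D·sqrt(1 - M/q²) < E (Cauchy–Schwarz)
  have hkey : ∀ q : ℝ, E ≤ q → M / q + D * Real.sqrt (1 - M / q ^ 2) < E := by
    intro q hq
    have hq0 : 0 < q := lt_of_lt_of_le hE0 hq
    have hq2 : M ≤ q ^ 2 := by nlinarith
    have hin : 0 ≤ 1 - M / q ^ 2 := by
      rw [sub_nonneg, div_le_one (by positivity)]; exact hq2
    set y := Real.sqrt (1 - M / q ^ 2) with hy
    have hy0 : 0 ≤ y := Real.sqrt_nonneg _
    have hy2 : y ^ 2 = 1 - M / q ^ 2 := Real.sq_sqrt hin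
    have hz2 : (y * q) ^ 2 = q ^ 2 - M := by
      have h' : y ^ 2 * q ^ 2 = (1 - M / q ^ 2) * q ^ 2 := by rw [hy2]
      have h'' : (1 - M / q ^ 2) * q ^ 2 = q ^ 2 - M := by field_simp
      calc (y * q) ^ 2 = y ^ 2 * q ^ 2 := by ring
      _ = q ^ 2 - M := by rw [h', h'']
    have hcs : (M + D * (y * q)) ^ 2 ≤ (M + D ^ 2) * q ^ 2 := by
      nlinarith [mul_nonneg hM0 (sq_nonneg (y * q - D)), hz2, sq_nonneg D]
    have hnn : 0 ≤ M + D * (y * q) := by positivity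
    have h' : M + D * (y * q) < E * q := by
      by_contra hcon
      push_neg at hcon
      nlinarith [mul_le_mul hcon hcon (mul_pos hE0 hq0).le hnn,
        mul_pos (show (0:ℝ) < E ^ 2 - (M + D ^ 2) by linarith) (show (0:ℝ) < q ^ 2 by positivity)]
    calc M / q + D * y = (M + D * (y * q)) / q := by field_simp
    _ < E := by rw [div_lt_iff₀ hq0]; linarith
  -- explicit form of g
  have hgfun : g = fun p => p - (Γ - 1) *
      (p / (Γ - 1) - E + M / (E + p) + D * Real.sqrt (1 - M / (E + p) ^ 2)) :=
    funext fun p => by rw [hg, hφ]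
  -- the derivative function
  set F' : ℝ → ℝ := fun p => (Γ - 1) * (M / (E + p) ^ 2) *
      (1 - D / Real.sqrt ((E + p) ^ 2 - M)) with hF'
  have hderiv : ∀ p : ℝ, 0 ≤ p → HasDerivAt g (F' p) p := by
    intro p hp
    have hq0 : 0 < E + p := by linarith
    have hq2M : M < (E + p) ^ 2 := by nlinarith
    have hinpos : 0 < 1 - M / (E + p) ^ 2 := by
      rw [sub_pos, div_lt_one (by positivity)]; exact hq2M
    have hSpos : 0 < Real.sqrt ((E + p) ^ 2 - M) := Real.sqrt_pos.2 (by linarith)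
    have h1 : HasDerivAt (fun x : ℝ => E + x) 1 p := by
      simpa using (hasDerivAt_id p).const_add E
    have h2 : HasDerivAt (fun x : ℝ => M / (E + x))
        ((0 * (E + p) - M * 1) / (E + p) ^ 2) p :=
      (hasDerivAt_const p M).div h1 hq0.ne'
    have h3 : HasDerivAt (fun x : ℝ => (E + x) ^ 2) ((2 : ℕ) * (E + p) ^ 1 * 1) p := h1.pow 2
    have h4 : HasDerivAt (fun x : ℝ => M / (E + x) ^ 2)
        ((0 * (E + p) ^ 2 - M * ((2 : ℕ) * (E + p) ^ 1 * 1)) / ((E + p) ^ 2) ^ 2) p :=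
      (hasDerivAt_const p M).div h3 (by positivity)
    have h5 : HasDerivAt (fun x : ℝ => 1 - M / (E + x) ^ 2)
        (0 - (0 * (E + p) ^ 2 - M * ((2 : ℕ) * (E + p) ^ 1 * 1)) / ((E + p) ^ 2) ^ 2) p :=
      (hasDerivAt_const p (1:ℝ)).sub h4
    have h6 := h5.sqrt hinpos.ne'
    have h7 : HasDerivAt (fun x : ℝ => x / (Γ - 1) - E + M / (E + x)
        + D * Real.sqrt (1 - M / (E + x) ^ 2))
        (1 / (Γ - 1) + (0 * (E + p) - M * 1) / (E + p) ^ 2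
          + D * ((0 - (0 * (E + p) ^ 2 - M * ((2 : ℕ) * (E + p) ^ 1 * 1)) / ((E + p) ^ 2) ^ 2)
              / (2 * Real.sqrt (1 - M / (E + p) ^ 2)))) p :=
      ((((hasDerivAt_id p).div_const (Γ - 1)).sub_const E).add h2).add (h6.const_mul D)
    have h8 := (hasDerivAt_id p).sub (h7.const_mul (Γ - 1))
    rw [hgfun]
    convert h8 using 1
    case e'_4 => rfl
    case e'_5 => rfl
    case e'_8 => rfl
    have hsq : Real.sqrt (1 - M / (E + p) ^ 2) = Real.sqrt ((E + p) ^ 2 - M) / (E + p) := by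
      rw [show 1 - M / (E + p) ^ 2 = ((E + p) ^ 2 - M) / (E + p) ^ 2 by field_simp,
        Real.sqrt_div (by linarith), Real.sqrt_sq hq0.le]
    rw [hF', hsq]
    field_simp
    ring
  -- bounds on F'
  have hbound : ∀ p : ℝ, 0 ≤ p → 0 ≤ F' p ∧ F' p ≤ δ := by
    intro p hp
    have hq0 : 0 < E + p := by linarith
    have hqE : E ≤ E + p := by linarith
    have hq2M : D ^ 2 < (E + p) ^ 2 - M := by nlinarith
    have hSpos : 0 < Real.sqrt ((E + p) ^ 2 - M) :=
      Real.sqrt_pos.2 (by nlinarith)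
    have hDS : D / Real.sqrt ((E + p) ^ 2 - M) < 1 := by
      rw [div_lt_one hSpos]
      exact (Real.lt_sqrt hD.le).2 hq2M
    have hDS0 : 0 ≤ D / Real.sqrt ((E + p) ^ 2 - M) := by positivity
    constructor
    · apply mul_nonneg (by positivity)
      linarith
    · have hfrac : M / (E + p) ^ 2 ≤ M / E ^ 2 := by
        apply div_le_div_of_nonneg_left hM0 ?_ ?_ |>.trans le_rfl
        · positivity
        · nlinarith
      calc F' p ≤ (Γ - 1) * (M / (E + p) ^ 2) * 1 := by
            apply mul_le_mul_of_nonneg_left (by linarith) (by positivity)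
      _ = (Γ - 1) * (M / (E + p) ^ 2) := by ring
      _ ≤ (Γ - 1) * (M / E ^ 2) := by
            apply mul_le_mul_of_nonneg_left hfrac hΓ.le
      _ = δ := by rw [hδ]; ring
  -- Lipschitz estimate on [0, ∞)
  have hlip : ∀ p₁ p₂ : ℝ, 0 ≤ p₁ → 0 ≤ p₂ → |g p₁ - g p₂| ≤ δ * |p₁ - p₂| := by
    intro p₁ p₂ h1 h2
    have := Convex.norm_image_sub_le_of_norm_hasDerivWithin_le
      (f := g) (f' := F') (s := Set.Ici (0:ℝ)) (C := δ)
      (fun x hx => (hderiv x hx).hasDerivWithinAt)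
      (fun x hx => by
        rw [Real.norm_eq_abs, abs_le]
        exact ⟨by linarith [(hbound x hx).1], (hbound x hx).2⟩)
      (convex_Ici 0) h2 h1
    simpa [Real.norm_eq_abs] using this
  -- g maps [0,∞) into (0,∞)
  have hgpos : ∀ p : ℝ, 0 ≤ p → 0 < g p := by
    intro p hp
    have h := hkey (E + p) (by linarith)
    rw [hg, hφ]
    have hid : p - (Γ - 1) * (p / (Γ - 1) - E + M / (E + p)
        + D * Real.sqrt (1 - M / (E + p) ^ 2))
        = (Γ - 1) * (E - (M / (E + p) + D * Real.sqrt (1 - M / (E + p) ^ 2))) := by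
      field_simp; ring
    rw [hid]
    exact mul_pos hΓ (by linarith)
  -- uniqueness of positive roots
  have huniq : ∀ a b : ℝ, 0 < a → 0 < b → φ a = 0 → φ b = 0 → a = b := by
    intro a b ha hb hfa hfb
    have hga : g a = a := by rw [hg, hfa]; ring
    have hgb : g b = b := by rw [hg, hfb]; ring
    have h := hlip a b ha.le hb.le
    rw [hga, hgb] at h
    have habs := abs_nonneg (a - b)
    have : |a - b| = 0 := by nlinarith
    have := abs_eq_zero.1 this
    linarith [sub_eq_zero.1 this]
  -- existence of a positive root via IVT
  have hroot : ∃ pstar : ℝ, 0 < pstar ∧ φ pstar = 0 := by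
    set P : ℝ := (Γ - 1) * (E + 1) with hPdef
    have hP0 : 0 < P := by positivity
    have hφfun : φ = fun p => (p - g p) / (Γ - 1) := by
      funext p; rw [hg]; field_simp; ring
    have hcont : ContinuousOn φ (Set.Icc 0 P) := by
      rw [hφfun]
      intro x hx
      exact ((continuousAt_id.sub (hderiv x hx.1).continuousAt).div_const _).continuousWithinAt
    have hφ0 : φ 0 < 0 := by
      have h := hkey E le_rfl
      rw [hφ]
      norm_num
      linarith
    have hφP : 0 < φ P := by
      rw [hφ]
      have h1 : P / (Γ - 1) = E + 1 := by rw [hPdef]; field_simp <;> ring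
      have h2 : 0 ≤ M / (E + P) := by positivity
      have h3 : 0 ≤ D * Real.sqrt (1 - M / (E + P) ^ 2) := by positivity
      rw [h1]; linarith
    have h0mem : (0:ℝ) ∈ Set.Icc (φ 0) (φ P) := ⟨hφ0.le, hφP.le⟩
    obtain ⟨pstar, hmem, hval⟩ := intermediate_value_Icc hP0.le hcont h0mem
    refine ⟨pstar, ?_, hval⟩
    rcases hmem.1.lt_or_eq with h | h
    · exact h
    · exfalso; rw [← h] at hval; linarith
  obtain ⟨pstar, hps, hpsval⟩ := hroot
  refine ⟨hδ1, ?_, hlip, ⟨pstar, ⟨hps, hpsval⟩, ?_⟩, ?_⟩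
  · intro p hp
    exact ⟨F' p, hderiv p hp.le, (hbound p hp.le).1, (hbound p hp.le).2⟩
  · rintro q ⟨hq, hqval⟩
    exact huniq q pstar hq hps hqval hpsval
  · intro ps hps' hval'
    have hgps : g ps = ps := by rw [hg, hval']; ring
    have hpos : ∀ n, 0 < seq n := by
      intro n
      induction n with
      | zero => exact hs0
      | succ n ih => rw [hsrec]; exact hgpos _ ih.le
    have herr : ∀ n, |seq n - ps| ≤ δ ^ n * |seq 0 - ps| := by
      intro n
      induction n with
      | zero => simp
      | succ n ih =>
        have h1 := hlip (seq n) ps (hpos n).le hps'.le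
        rw [hgps] at h1
        calc |seq (n + 1) - ps| = |g (seq n) - ps| := by rw [hsrec]
        _ ≤ δ * |seq n - ps| := h1
        _ ≤ δ * (δ ^ n * |seq 0 - ps|) := by
            exact mul_le_mul_of_nonneg_left ih hδ0
        _ = δ ^ (n + 1) * |seq 0 - ps| := by ring
    refine ⟨fun n => (hpos n).le, herr, ?_⟩
    rw [tendsto_iff_dist_tendsto_zero]
    have hlim : Filter.Tendsto (fun n => δ ^ n * |seq 0 - ps|) Filter.atTop (nhds 0) := by
      simpa using (tendsto_pow_atTop_nhds_zero_of_lt_one hδ0 hδ1).mul_const |seq 0 - ps|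
    exact squeeze_zero (fun n => dist_nonneg)
      (fun n => by rw [Real.dist_eq]; exact herr n) hlim
end

section
/- Scaling limiter preserves admissibility of linear constraints: let G* = {W ∈ ℝⁿ : W·ξ > 0 ∀ξ ∈ Ξ} for a vector family Ξ, let W̄ ∈ G*, let W : S → ℝⁿ be any function on a finite set S, and define q_min = min_{x∈S} q(W(x)) where q is a concave function with q(W̄) > 0. If q_min < ε ≤ q(W̄) for some ε > 0 and θ = (q(W̄) − ε)/(q(W̄) − q_min) ∈ [0,1), then the modified values W̃(x) = θ(W(x) − W̄) + W̄ satisfy q(W̃(x)) ≥ ε for all x ∈ S, provided q is concave. -/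
open Matrix

/-- correctness of the scaling (PCP) limiter for a concave constraint `q`:
if `q(W̄) ≥ ε > q_min = min_x q(W(x))` and `θ = (q(W̄)-ε)/(q(W̄)-q_min)`, then `θ ∈ [0,1)`
and the limited values `W̃(x) = θ(W(x)-W̄) + W̄` satisfy `q(W̃(x)) ≥ ε` for all `x`. -/
theorem stmt16 {n : ℕ} {ι : Type*} [Fintype ι] [Nonempty ι]
    (Ξ : Set (Fin n → ℝ))
    (q : (Fin n → ℝ) → ℝ) (hq : ConcaveOn ℝ Set.univ q)
    (Wbar : Fin n → ℝ) (hWbarG : ∀ ξ ∈ Ξ, 0 < Wbar ⬝ᵥ ξ)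
    (hqWbar : 0 < q Wbar)
    (W : ι → (Fin n → ℝ)) (qmin ε θ : ℝ)
    (hqmin : qmin = Finset.univ.inf' Finset.univ_nonempty (fun x => q (W x)))
    (hε : 0 < ε) (hεle : ε ≤ q Wbar) (hlt : qmin < ε)
    (hθ : θ = (q Wbar - ε) / (q Wbar - qmin)) :
    (0 ≤ θ ∧ θ < 1) ∧ ∀ x : ι, ε ≤ q (θ • (W x - Wbar) + Wbar) := by
  have hden : 0 < q Wbar - qmin := by linarith
  have hθ0 : 0 ≤ θ := by
    rw [hθ]; exact div_nonneg (by linarith) hden.le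
  have hθ1 : θ < 1 := by
    rw [hθ]; rw [div_lt_one hden]; linarith
  refine ⟨⟨hθ0, hθ1⟩, fun x => ?_⟩
  have hmin : qmin ≤ q (W x) := by
    rw [hqmin]; exact Finset.inf'_le _ (Finset.mem_univ x)
  have hkey := hq.2 (Set.mem_univ (W x)) (Set.mem_univ Wbar) hθ0
    (by linarith : (0:ℝ) ≤ 1 - θ) (by ring)
  have heq : θ • (W x - Wbar) + Wbar = θ • W x + (1 - θ) • Wbar := by
    ext i; simp [smul_sub]; ring
  rw [heq]
  have h2 : θ * qmin + (1 - θ) * q Wbar = ε := by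
    rw [hθ]; field_simp; ring
  have h3 : θ * qmin ≤ θ * q (W x) := by nlinarith
  calc ε = θ * qmin + (1 - θ) * q Wbar := h2.symm
    _ ≤ θ * q (W x) + (1 - θ) * q Wbar := by linarith
    _ ≤ q (θ • W x + (1 - θ) • Wbar) := hkey
end
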